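/- arXiv:2002.08496 — 4 statements merged into one kernel-verified Lean document; each statement's English description precedes it below -/
import Mathlib

section
/- Let f = (f₁, …, f_n) be a finite sequence of continuous functions ℝ → ℝ, x ≤ y in ℝ, and 1 ≤ m < ℓ ≤ n. Then for any k ∈ {m, m+1, …, ℓ}, the metric composition law holds: f[(x,ℓ)→(y,m)] = sup_{z∈[x,y]} ( f[(x,ℓ)→(z,k)] + f[(z,k)→(y,m)] ). -/
open Set

/-- A jump-time sequence encoding a nonincreasing cadlag path from `(x,l)` to `(y,m)`:
`t i` is the time at which the path jumps from line `i+1` to line `i`, with the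
conventions `t l = x` and `t (m-1) = y`. -/
def IsJumpSeq (x y : ℝ) (m l : ℕ) (t : ℕ → ℝ) : Prop :=
  t l = x ∧ t (m - 1) = y ∧ ∀ i j : ℕ, m - 1 ≤ i → i ≤ j → j ≤ l → t j ≤ t i

/-- Length of the path encoded by the jump-time sequence `t`: the sum of the increments
of `f` along the path, `∑_{i=m}^{l} (f i (t (i-1)) − f i (t i))`. -/
noncomputable def pathLen (f : ℕ → ℝ → ℝ) (m l : ℕ) (t : ℕ → ℝ) : ℝ :=
  ∑ i ∈ Finset.Icc m l, (f i (t (i - 1)) - f i (t i))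

/-- Last passage value `f[(x,l)→(y,m)]`: supremum of path lengths over all paths from
`(x,l)` to `(y,m)`. -/
noncomputable def lppValue (f : ℕ → ℝ → ℝ) (x : ℝ) (l : ℕ) (y : ℝ) (m : ℕ) : ℝ :=
  sSup (pathLen f m l '' {t | IsJumpSeq x y m l t})

private lemma sum_Icc_split (M : ℕ → ℝ) {m k l : ℕ} (h1 : 1 ≤ m) (hmk : m ≤ k) (hkl : k ≤ l) :
    (∑ i ∈ Finset.Icc m k, M i) + ∑ i ∈ Finset.Icc (k + 1) l, M i
      = ∑ i ∈ Finset.Icc m l, M i := by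
  obtain ⟨m', rfl⟩ : ∃ m', m = m' + 1 := ⟨m - 1, by omega⟩
  rw [Finset.Icc_add_one_left_eq_Ioc, Finset.Icc_add_one_left_eq_Ioc, Finset.Icc_add_one_left_eq_Ioc]
  exact Finset.sum_Ioc_consecutive M (by omega) hkl

private lemma jumpSeq_mem_Icc {x y : ℝ} {m l : ℕ} {t : ℕ → ℝ}
    (ht : IsJumpSeq x y m l t) {i : ℕ} (h1 : m - 1 ≤ i) (h2 : i ≤ l) :
    t i ∈ Set.Icc x y := by
  obtain ⟨hl, hm, hmono⟩ := ht
  constructor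
  · rw [← hl]; exact hmono i l h1 h2 le_rfl
  · rw [← hm]; exact hmono (m - 1) i le_rfl h1 h2

private lemma exists_jumpSeq {x' y' : ℝ} (hxy : x' ≤ y') {m l : ℕ} (h : m - 1 < l) :
    ∃ t, IsJumpSeq x' y' m l t := by
  refine ⟨fun i => if i = l then x' else y', ?_, ?_, ?_⟩
  · simp
  · simp [Nat.ne_of_lt h]
  · intro i j hi hij hjl
    by_cases hj : j = l <;> by_cases hi' : i = l <;> simp_all <;> omega

private lemma pathLen_le_of_jumpSeq {f : ℕ → ℝ → ℝ} {x y x' y' : ℝ} {m l : ℕ} {t : ℕ → ℝ}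
    (ht : IsJumpSeq x' y' m l t) (hm : 1 ≤ m) (hx : x ≤ x') (hy : y' ≤ y)
    {C : ℕ → ℝ} (hC : ∀ i, ∀ a ∈ Set.Icc x y, |f i a| ≤ C i) :
    pathLen f m l t ≤ ∑ i ∈ Finset.Icc m l, 2 * C i := by
  apply Finset.sum_le_sum
  intro i hi
  simp only [Finset.mem_Icc] at hi
  have h1 : t (i - 1) ∈ Set.Icc x y := by
    have := jumpSeq_mem_Icc ht (show m - 1 ≤ i - 1 by omega) (show i - 1 ≤ l by omega)
    exact ⟨hx.trans this.1, this.2.trans hy⟩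
  have h2 : t i ∈ Set.Icc x y := by
    have := jumpSeq_mem_Icc ht (show m - 1 ≤ i by omega) (show i ≤ l by omega)
    exact ⟨hx.trans this.1, this.2.trans hy⟩
  have b1 := hC i _ h1
  have b2 := hC i _ h2
  have := abs_le.1 b1
  have := abs_le.1 b2
  linarith

/-- Splitting a path at line `k`, at time `t k`. -/
private lemma split_path (f : ℕ → ℝ → ℝ) {x y : ℝ} {m k l : ℕ}
    (hm : 1 ≤ m) (hmk : m ≤ k) (hkl : k ≤ l) {t : ℕ → ℝ} (ht : IsJumpSeq x y m l t) :
    IsJumpSeq x (t k) k l (Function.update t (k - 1) (t k)) ∧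
    IsJumpSeq (t k) y m k t ∧
    pathLen f m l t = pathLen f k l (Function.update t (k - 1) (t k)) + pathLen f m k t := by
  obtain ⟨hl, hme, hmono⟩ := ht
  have hk1 : k - 1 < k := by omega
  have hup : ∀ i, i ≠ k - 1 → Function.update t (k - 1) (t k) i = t i :=
    fun i hi => Function.update_of_ne hi _ _
  refine ⟨⟨?_, ?_, ?_⟩, ⟨rfl, hme, fun i j hi hij hjk => hmono i j hi hij (hjk.trans hkl)⟩, ?_⟩
  · rw [hup l (by omega)]; exact hl
  · exact Function.update_self _ _ _
  · intro i j hi hij hjl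
    by_cases hik : i = k - 1
    · subst hik
      rw [Function.update_self]
      by_cases hjk : j = k - 1
      · subst hjk; rw [Function.update_self]
      · rw [hup j hjk]
        exact hmono k j (by omega) (by omega) hjl
    · rw [hup i hik]
      have hik' : k ≤ i := by omega
      rw [hup j (by omega)]
      exact hmono i j (by omega) hij hjl
  · have e1 : pathLen f k l (Function.update t (k - 1) (t k))
        = ∑ i ∈ Finset.Icc (k + 1) l, (f i (t (i - 1)) - f i (t i)) := by
      rw [pathLen, ← sum_Icc_split _ (by omega) le_rfl hkl]
      have : ∑ i ∈ Finset.Icc k k,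
          (f i (Function.update t (k - 1) (t k) (i - 1))
            - f i (Function.update t (k - 1) (t k) i)) = 0 := by
        rw [Finset.Icc_self, Finset.sum_singleton, Function.update_self,
          hup k (by omega), sub_self]
      rw [this, zero_add]
      apply Finset.sum_congr rfl
      intro i hi
      simp only [Finset.mem_Icc] at hi
      rw [hup (i - 1) (by omega), hup i (by omega)]
    rw [e1, pathLen, pathLen, ← sum_Icc_split _ hm hmk hkl]
    ring

/-- Gluing two paths at line `k` at time `z`. -/
private lemma glue_path (f : ℕ → ℝ → ℝ) {x y z : ℝ} {m k l : ℕ}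
    (hm : 1 ≤ m) (hmk : m ≤ k) (hkl : k ≤ l)
    {t' t'' : ℕ → ℝ} (h1 : IsJumpSeq x z k l t') (h2 : IsJumpSeq z y m k t'') :
    IsJumpSeq x y m l (fun i => if i < k then t'' i else t' i) ∧
    pathLen f m l (fun i => if i < k then t'' i else t' i)
      = pathLen f k l t' + pathLen f m k t'' := by
  obtain ⟨h1l, h1k, h1mono⟩ := h1
  obtain ⟨h2k, h2m, h2mono⟩ := h2
  set T : ℕ → ℝ := fun i => if i < k then t'' i else t' i with hT
  have hTlt : ∀ i, i < k → T i = t'' i := fun i hi => if_pos hi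
  have hTge : ∀ i, k ≤ i → T i = t' i := fun i hi => if_neg (by omega)
  refine ⟨⟨?_, ?_, ?_⟩, ?_⟩
  · rw [hTge l (by omega)]; exact h1l
  · rw [hTlt (m - 1) (by omega)]; exact h2m
  · intro i j hi hij hjl
    by_cases hik : i < k
    · by_cases hjk : j < k
      · rw [hTlt i hik, hTlt j hjk]
        exact h2mono i j hi hij (by omega)
      · rw [hTlt i hik, hTge j (by omega)]
        have e1 : t' j ≤ t' (k - 1) := h1mono (k - 1) j le_rfl (by omega) hjl
        have e2 : t'' k ≤ t'' i := h2mono i k hi (by omega) le_rfl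
        rw [h1k] at e1; rw [h2k] at e2
        linarith
    · rw [hTge i (by omega), hTge j (by omega)]
      exact h1mono i j (by omega) hij hjl
  · have claimA : ∑ i ∈ Finset.Icc m k, (f i (T (i - 1)) - f i (T i))
        = pathLen f m k t'' + (f k z - f k (t' k)) := by
      have key : ∑ i ∈ Finset.Icc m k,
          ((f i (T (i - 1)) - f i (T i)) - (f i (t'' (i - 1)) - f i (t'' i)))
          = f k z - f k (t' k) := by
        rw [Finset.sum_eq_single_of_mem k (by simp [hmk])]
        · rw [hTlt (k - 1) (by omega), hTge k le_rfl, h2k]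
          ring
        · intro i hi hne
          simp only [Finset.mem_Icc] at hi
          rw [hTlt (i - 1) (by omega), hTlt i (by omega), sub_self]
      rw [Finset.sum_sub_distrib] at key
      rw [pathLen]
      linarith
    have claimB : ∑ i ∈ Finset.Icc (k + 1) l, (f i (T (i - 1)) - f i (T i))
        = pathLen f k l t' - (f k z - f k (t' k)) := by
      have e1 : ∑ i ∈ Finset.Icc (k + 1) l, (f i (T (i - 1)) - f i (T i))
          = ∑ i ∈ Finset.Icc (k + 1) l, (f i (t' (i - 1)) - f i (t' i)) := by
        apply Finset.sum_congr rfl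
        intro i hi
        simp only [Finset.mem_Icc] at hi
        rw [hTge (i - 1) (by omega), hTge i (by omega)]
      have e2 : (∑ i ∈ Finset.Icc k k, (f i (t' (i - 1)) - f i (t' i)))
          + ∑ i ∈ Finset.Icc (k + 1) l, (f i (t' (i - 1)) - f i (t' i))
          = pathLen f k l t' := sum_Icc_split _ (by omega) le_rfl hkl
      rw [Finset.Icc_self, Finset.sum_singleton, h1k] at e2
      rw [e1]
      linarith
    rw [pathLen, ← sum_Icc_split _ hm hmk hkl, claimA, claimB]
    ring

theorem stmt4 (n : ℕ) (f : ℕ → ℝ → ℝ) (hf : ∀ i, Continuous (f i))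
    (x y : ℝ) (hxy : x ≤ y)
    (m k l : ℕ) (hm : 1 ≤ m) (hml : m < l) (hln : l ≤ n) (hmk : m ≤ k) (hkl : k ≤ l) :
    lppValue f x l y m
      = sSup ((fun z => lppValue f x l z k + lppValue f z k y m) '' Set.Icc x y) := by
  -- uniform bounds on f over [x,y]
  choose C hC using fun i =>
    isCompact_Icc.exists_bound_of_continuousOn (s := Set.Icc x y) (hf i).continuousOn
  simp only [Real.norm_eq_abs] at hC
  set A : Set ℝ := pathLen f m l '' {t | IsJumpSeq x y m l t} with hA
  set B : ℝ → Set ℝ := fun z => pathLen f k l '' {t | IsJumpSeq x z k l t} with hB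
  set Cs : ℝ → Set ℝ := fun z => pathLen f m k '' {t | IsJumpSeq z y m k t} with hCs
  set K1 : ℝ := ∑ i ∈ Finset.Icc k l, 2 * C i with hK1
  set K2 : ℝ := ∑ i ∈ Finset.Icc m k, 2 * C i with hK2
  have hA_bdd : BddAbove A := by
    refine ⟨∑ i ∈ Finset.Icc m l, 2 * C i, ?_⟩
    rintro a ⟨t, ht, rfl⟩
    exact pathLen_le_of_jumpSeq ht hm le_rfl le_rfl hC
  have hA_ne : A.Nonempty := by
    obtain ⟨t, ht⟩ := exists_jumpSeq hxy (show m - 1 < l by omega)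
    exact ⟨pathLen f m l t, t, ht, rfl⟩
  have hB_bdd : ∀ z ∈ Set.Icc x y, BddAbove (B z) := by
    intro z hz
    refine ⟨K1, ?_⟩
    rintro a ⟨t, ht, rfl⟩
    exact pathLen_le_of_jumpSeq ht (by omega) le_rfl hz.2 hC
  have hB_ne : ∀ z ∈ Set.Icc x y, (B z).Nonempty := by
    intro z hz
    obtain ⟨t, ht⟩ := exists_jumpSeq hz.1 (show k - 1 < l by omega)
    exact ⟨pathLen f k l t, t, ht, rfl⟩
  have hC_bdd : ∀ z ∈ Set.Icc x y, BddAbove (Cs z) := by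
    intro z hz
    refine ⟨K2, ?_⟩
    rintro a ⟨t, ht, rfl⟩
    exact pathLen_le_of_jumpSeq ht hm hz.1 le_rfl hC
  have hC_ne : ∀ z ∈ Set.Icc x y, (Cs z).Nonempty := by
    intro z hz
    obtain ⟨t, ht⟩ := exists_jumpSeq hz.2 (show m - 1 < k by omega)
    exact ⟨pathLen f m k t, t, ht, rfl⟩
  have hBv : ∀ z, lppValue f x l z k = sSup (B z) := fun z => rfl
  have hCv : ∀ z, lppValue f z k y m = sSup (Cs z) := fun z => rfl
  have hg_le : ∀ z ∈ Set.Icc x y, lppValue f x l z k + lppValue f z k y m ≤ K1 + K2 := by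
    intro z hz
    rw [hBv, hCv]
    have b1 : sSup (B z) ≤ K1 := csSup_le (hB_ne z hz) (by
      rintro a ⟨t, ht, rfl⟩
      exact pathLen_le_of_jumpSeq ht (by omega) le_rfl hz.2 hC)
    have b2 : sSup (Cs z) ≤ K2 := csSup_le (hC_ne z hz) (by
      rintro a ⟨t, ht, rfl⟩
      exact pathLen_le_of_jumpSeq ht hm hz.1 le_rfl hC)
    linarith
  have hRHS_bdd : BddAbove ((fun z => lppValue f x l z k + lppValue f z k y m) '' Set.Icc x y) := by
    refine ⟨K1 + K2, ?_⟩
    rintro a ⟨z, hz, rfl⟩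
    exact hg_le z hz
  have hRHS_ne : ((fun z => lppValue f x l z k + lppValue f z k y m) '' Set.Icc x y).Nonempty :=
    ⟨_, ⟨x, ⟨le_rfl, hxy⟩, rfl⟩⟩
  have hAv : lppValue f x l y m = sSup A := rfl
  rw [hAv]
  apply le_antisymm
  · -- split direction
    apply csSup_le hA_ne
    rintro a ⟨t, ht, rfl⟩
    set z := t k with hzdef
    have hz : z ∈ Set.Icc x y := jumpSeq_mem_Icc ht (by omega) hkl
    obtain ⟨hu, hlo, heq⟩ := split_path f hm hmk hkl ht
    have hb : pathLen f k l (Function.update t (k - 1) (t k)) ≤ lppValue f x l z k := by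
      rw [hBv]
      exact le_csSup (hB_bdd z hz) ⟨_, hu, rfl⟩
    have hc : pathLen f m k t ≤ lppValue f z k y m := by
      rw [hCv]
      exact le_csSup (hC_bdd z hz) ⟨_, hlo, rfl⟩
    calc pathLen f m l t = _ + _ := heq
      _ ≤ lppValue f x l z k + lppValue f z k y m := add_le_add hb hc
      _ ≤ _ := le_csSup hRHS_bdd ⟨z, hz, rfl⟩
  · -- glue direction
    apply csSup_le hRHS_ne
    rintro a ⟨z, hz, rfl⟩
    simp only
    rw [hBv, hCv]
    have key : ∀ b ∈ B z, ∀ c ∈ Cs z, b + c ≤ sSup A := by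
      rintro b ⟨t', ht', rfl⟩ c ⟨t'', ht'', rfl⟩
      obtain ⟨hglue, heq⟩ := glue_path f hm hmk hkl ht' ht''
      rw [← heq]
      exact le_csSup hA_bdd ⟨_, hglue, rfl⟩
    have h1 : sSup (B z) ≤ sSup A - sSup (Cs z) := by
      apply csSup_le (hB_ne z hz)
      intro b hb
      have h2 : sSup (Cs z) ≤ sSup A - b := by
        apply csSup_le (hC_ne z hz)
        intro c hc
        linarith [key b hb c hc]
      linarith
    linarith
end

section
/- Let B : [0,T] → ℝ be a standard Brownian motion and let f : [0,T] → ℝ be a bounded (deterministic) measurable function such that almost surely the supremum of f(s) + B(s) over (0,T] is attained at some point of (0,T]. Then the law of M := sup_{s∈(0,T]} ( f(s) + B(s) ) is absolutely continuous with respect to Lebesgue measure on ℝ. -/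
open MeasureTheory ProbabilityTheory Set

/-- `B` is a Brownian motion on the time set `S ∋ 0`, started at `b`, with diffusion
parameter `σ2`: continuous paths, Gaussian increments of variance `σ2·(t−s)`, and
independent increments. -/
structure IsBrownianMotionOn {Ω : Type*} [MeasureSpace Ω] (B : Ω → ℝ → ℝ)
    (b σ2 : ℝ) (S : Set ℝ) : Prop where
  cont : ∀ ω, ContinuousOn (B ω) S
  init : ∀ ω, B ω 0 = b
  gauss : ∀ s t : ℝ, s ∈ S → t ∈ S → s ≤ t →
    Measure.map (fun ω => B ω t - B ω s) ℙ = gaussianReal 0 (Real.toNNReal (σ2 * (t - s)))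
  indep : ∀ (n : ℕ) (u : ℕ → ℝ), (∀ i, u i ∈ S) → Monotone u →
    iIndepFun (fun i : Fin n => fun ω => B ω (u (i + 1)) - B ω (u i)) ℙ

private lemma measurable_finset_sup' {α ι : Type*} {m : MeasurableSpace α} (s : Finset ι)
    {g : ι → α → ℝ} (hg : ∀ i, Measurable (g i)) (hs : s.Nonempty) :
    Measurable fun a => s.sup' hs fun i => g i a := by
  classical
  induction s using Finset.cons_induction with
  | empty => exact absurd hs (by simp)
  | cons i s hi ih =>
    rcases s.eq_empty_or_nonempty with rfl | hs'
    · simpa using hg i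
    · simp only [Finset.sup'_cons hs']
      exact (hg i).sup (ih hs')

private lemma finset_sup'_add_const {ι : Type*} (s : Finset ι) (hs : s.Nonempty) (g : ι → ℝ)
    (b : ℝ) : (s.sup' hs fun i => g i + b) = (s.sup' hs g) + b := by
  classical
  induction s using Finset.cons_induction with
  | empty => exact absurd hs (by simp)
  | cons i s hi ih =>
    rcases s.eq_empty_or_nonempty with rfl | hs'
    · simp
    · simp only [Finset.sup'_cons hs', ih hs']
      exact max_add_add_right (g i) (s.sup' hs' g) b

private lemma indep_mono {Ω : Type*} {mΩ : MeasurableSpace Ω} {μ : Measure Ω}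
    {m1 m2 m1' m2' : MeasurableSpace Ω} (h : Indep m1 m2 μ) (h1 : m1' ≤ m1) (h2 : m2' ≤ m2) :
    Indep m1' m2' μ := by
  rw [Indep_iff] at h ⊢
  exact fun t1 t2 ht1 ht2 => h t1 t2 (h1 _ ht1) (h2 _ ht2)

private lemma key_ac {Ω : Type*} [MeasureSpace Ω] [IsProbabilityMeasure (ℙ : Measure Ω)]
    (T : ℝ) (B : Ω → ℝ → ℝ) (hB : IsBrownianMotionOn B 0 1 (Set.Icc 0 T))
    (hBmeas : Measurable fun ω => (B ω : ℝ → ℝ))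
    (f : ℝ → ℝ) (C : ℝ) (hfbdd : ∀ s ∈ Set.Icc 0 T, |f s| ≤ C)
    (t : ℝ) (ht0 : 0 < t) (htT : t ≤ T) :
    Measurable (fun ω => sSup ((fun s => f s + B ω s) '' Set.Icc t T)) ∧
      ∀ N : Set ℝ, MeasurableSet N → volume N = 0 →
        ℙ ((fun ω => sSup ((fun s => f s + B ω s) '' Set.Icc t T)) ⁻¹' N) = 0 := by
  classical
  have hT0 : (0:ℝ) ≤ T := le_trans ht0.le htT
  have hsub0T : Set.Icc t T ⊆ Set.Icc 0 T := Set.Icc_subset_Icc ht0.le le_rfl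
  set M : Ω → ℝ := fun ω => sSup ((fun s => f s + B ω s) '' Set.Icc t T) with hM
  set w : ℕ → ℝ := fun n => (T - t) / 2 ^ n with hwdef
  have hw0 : ∀ n, 0 ≤ w n := fun n => div_nonneg (sub_nonneg.mpr htT) (by positivity)
  set x : ℕ → ℕ → ℝ := fun n k => t + k * w n with hxdef
  have hx_mono : ∀ n, Monotone fun k => x n k := by
    intro n a b hab
    exact add_le_add_right (mul_le_mul_of_nonneg_right (Nat.cast_le.mpr hab) (hw0 n)) t
  have hx0 : ∀ n, x n 0 = t := by intro n; simp [hxdef]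
  have hxtop : ∀ n, x n (2 ^ n) = T := by
    intro n
    have h2 : ((2:ℝ) ^ n) ≠ 0 := by positivity
    simp only [hxdef, hwdef]
    push_cast
    field_simp
    ring
  have hx_mem : ∀ n k, k ≤ 2 ^ n → x n k ∈ Set.Icc t T := by
    intro n k hk
    constructor
    · rw [← hx0 n]; exact hx_mono n (Nat.zero_le k)
    · rw [← hxtop n]; exact hx_mono n hk
  have hx_gap : ∀ n k, x n (k+1) - x n k = w n := by
    intro n k; simp only [hxdef]; push_cast; ring
  have hx_succ : ∀ n k, x n k = x (n+1) (2*k) := by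
    intro n k
    simp only [hxdef, hwdef]
    push_cast
    rw [pow_succ]
    field_simp
  set F : ℕ → ℕ → ℝ := fun n k => sSup (f '' Set.Icc (x n k) (x n (k+1))) with hFdef
  have hIccsub : ∀ n k, k < 2 ^ n → Set.Icc (x n k) (x n (k+1)) ⊆ Set.Icc t T := by
    intro n k hk
    exact Set.Icc_subset_Icc (hx_mem n k hk.le).1 (hx_mem n (k+1) hk).2
  have hx_le_succ : ∀ n k, x n k ≤ x n (k+1) := fun n k => hx_mono n (Nat.le_succ k)
  have hFne : ∀ n k, (f '' Set.Icc (x n k) (x n (k+1))).Nonempty :=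
    fun n k => ⟨f (x n k), Set.mem_image_of_mem f (Set.left_mem_Icc.mpr (hx_le_succ n k))⟩
  have hFbdd : ∀ n k, k < 2 ^ n → BddAbove (f '' Set.Icc (x n k) (x n (k+1))) := by
    intro n k hk
    refine ⟨C, ?_⟩
    rintro y ⟨s, hs, rfl⟩
    exact le_trans (le_abs_self _) (hfbdd s (hsub0T (hIccsub n k hk hs)))
  have hrne : ∀ n, (Finset.range (2 ^ n)).Nonempty :=
    fun n => ⟨0, Finset.mem_range.mpr (Nat.pow_pos (by norm_num : 0 < 2))⟩
  set S : ℕ → Ω → ℝ :=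
    fun n ω => (Finset.range (2 ^ n)).sup' (hrne n) fun k => F n k + B ω (x n k) with hSdef
  have Bpt : ∀ r : ℝ, Measurable fun ω => B ω r :=
    fun r => (measurable_pi_apply r).comp hBmeas
  -- boundedness of images
  have hMbdd : ∀ ω, BddAbove ((fun s => f s + B ω s) '' Set.Icc t T) := by
    intro ω
    obtain ⟨Cb, hCb⟩ := isCompact_Icc.exists_bound_of_continuousOn (hB.cont ω)
    refine ⟨C + Cb, ?_⟩
    rintro y ⟨s, hs, rfl⟩
    have h1 : f s ≤ C := le_trans (le_abs_self _) (hfbdd s (hsub0T hs))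
    have h2 : B ω s ≤ Cb := le_trans (le_abs_self _) (hCb s (hsub0T hs))
    exact add_le_add h1 h2
  have hMne : ∀ ω, ((fun s => f s + B ω s) '' Set.Icc t T).Nonempty :=
    fun ω => ⟨_, Set.mem_image_of_mem _ (Set.left_mem_Icc.mpr htT)⟩
  -- the partition lemma
  have hpart : ∀ n, ∀ s ∈ Set.Icc t T, ∃ k, k < 2 ^ n ∧ x n k ≤ s ∧ s ≤ x n (k+1) := by
    intro n s hs
    have h2pos : 0 < 2 ^ n := Nat.pow_pos (by norm_num : 0 < 2)
    rcases eq_or_lt_of_le (hw0 n) with hw | hw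
    · have hTt : T = t := by
        have h2 : ((2:ℝ) ^ n) ≠ 0 := by positivity
        have h3 : (T - t) / 2 ^ n = 0 := hw.symm
        field_simp at h3
        linarith
      refine ⟨0, h2pos, ?_, ?_⟩
      · rw [hx0 n]; exact hs.1
      · have hx1 : x n 1 = t := by
          simp only [hxdef]
          rw [← hw]
          norm_num
        rw [hx1]
        calc s ≤ T := hs.2
        _ = t := hTt
    · refine ⟨min ⌊(s - t) / w n⌋₊ (2 ^ n - 1), lt_of_le_of_lt (min_le_right _ _)
        (Nat.sub_lt h2pos one_pos), ?_, ?_⟩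
      · have hk1 : ((min ⌊(s - t) / w n⌋₊ (2 ^ n - 1) : ℕ) : ℝ) ≤ (s - t) / w n := by
          calc ((min ⌊(s - t) / w n⌋₊ (2 ^ n - 1) : ℕ) : ℝ) ≤ (⌊(s - t) / w n⌋₊ : ℝ) :=
                Nat.cast_le.mpr (min_le_left _ _)
          _ ≤ (s - t) / w n := Nat.floor_le (div_nonneg (sub_nonneg.mpr hs.1) (hw0 n))
        have := (le_div_iff₀ hw).mp hk1
        simp only [hxdef]
        linarith
      · rcases le_or_gt (⌊(s - t) / w n⌋₊) (2 ^ n - 1) with hc | hc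
        · rw [min_eq_left hc]
          have h1 : (s - t) / w n < (⌊(s - t) / w n⌋₊ : ℝ) + 1 := Nat.lt_floor_add_one _
          have h2 : s - t < ((⌊(s - t) / w n⌋₊ : ℝ) + 1) * w n := (div_lt_iff₀ hw).mp h1
          simp only [hxdef]
          push_cast
          linarith
        · rw [min_eq_right hc.le]
          have : 2 ^ n - 1 + 1 = 2 ^ n := Nat.sub_add_cancel h2pos
          rw [this, hxtop n]
          exact hs.2
  -- convergence S n ω → M ω
  have hconv : ∀ ω, Filter.Tendsto (fun n => S n ω) Filter.atTop (nhds (M ω)) := by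
    intro ω
    rw [Metric.tendsto_atTop]
    intro ε hε
    have hcont : ContinuousOn (B ω) (Set.Icc t T) := (hB.cont ω).mono hsub0T
    have huc := isCompact_Icc.uniformContinuousOn_of_continuous hcont
    rw [Metric.uniformContinuousOn_iff] at huc
    obtain ⟨δ, hδ, hgd⟩ := huc (ε/2) (half_pos hε)
    obtain ⟨N0, hN0⟩ : ∃ N0 : ℕ, w N0 < δ := by
      obtain ⟨m, hm⟩ := exists_nat_gt ((T - t) / δ)
      refine ⟨m, ?_⟩
      have hm2 : (T - t) / δ < (2:ℝ) ^ m := by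
        calc (T - t) / δ < (m : ℝ) := hm
        _ ≤ (2:ℝ) ^ m := by exact_mod_cast (Nat.lt_two_pow_self (n := m)).le
      have h2m : (0:ℝ) < 2 ^ m := by positivity
      have hlt : T - t < δ * 2 ^ m := by
        rw [div_lt_iff₀ hδ] at hm2
        linarith
      show w m < δ
      simp only [hwdef]
      rw [div_lt_iff₀ h2m]
      linarith
    refine ⟨N0, fun n hn => ?_⟩
    have hwn : w n < δ := by
      have : w n ≤ w N0 := by
        apply div_le_div_of_nonneg_left (sub_nonneg.mpr htT) (by positivity)
        exact pow_le_pow_right₀ (by norm_num) hn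
      linarith
    -- distance bound within a cell
    have hdist : ∀ k, k < 2 ^ n → ∀ s ∈ Set.Icc (x n k) (x n (k+1)),
        |B ω s - B ω (x n k)| < ε/2 := by
      intro k hk s hs
      have h1 : dist s (x n k) < δ := by
        rw [Real.dist_eq, abs_of_nonneg (sub_nonneg.mpr hs.1)]
        have := hx_gap n k
        linarith [hs.2]
      have := hgd s (hIccsub n k hk hs) (x n k) (hx_mem n k hk.le) h1
      rwa [Real.dist_eq] at this
    have bound1 : S n ω ≤ M ω + ε/2 := by
      apply Finset.sup'_le
      intro k hk
      rw [Finset.mem_range] at hk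
      have hF : F n k ≤ (M ω + ε/2) - B ω (x n k) := by
        apply csSup_le (hFne n k)
        rintro y ⟨s, hs, rfl⟩
        have hle : f s + B ω s ≤ M ω :=
          le_csSup (hMbdd ω) (Set.mem_image_of_mem _ (hIccsub n k hk hs))
        have hd := hdist k hk s hs
        rw [abs_lt] at hd
        linarith
      linarith
    have bound2 : M ω ≤ S n ω + ε/2 := by
      apply csSup_le (hMne ω)
      rintro y ⟨s, hs, rfl⟩
      obtain ⟨k, hk, hks, hsk⟩ := hpart n s hs
      have h1 : f s ≤ F n k := le_csSup (hFbdd n k hk) (Set.mem_image_of_mem f ⟨hks, hsk⟩)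
      have hd := hdist k hk s ⟨hks, hsk⟩
      rw [abs_lt] at hd
      have h3 : F n k + B ω (x n k) ≤ S n ω :=
        Finset.le_sup' (fun k => F n k + B ω (x n k)) (Finset.mem_range.mpr hk)
      linarith
    rw [Real.dist_eq, abs_lt]
    constructor <;> linarith
  -- measurability
  have hSmeas : ∀ n, Measurable (S n) := by
    intro n
    rw [hSdef]
    exact measurable_finset_sup' _ (fun k => measurable_const.add (Bpt (x n k))) (hrne n)
  have hMmeas : Measurable M :=
    measurable_of_tendsto_metrizable hSmeas (tendsto_pi_nhds.mpr hconv)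
  -- the increment processes
  set V : ℕ → Ω → ℕ → ℝ := fun n ω k => B ω (x n (min k (2 ^ n))) - B ω t with hVdef
  have hVmeas : ∀ n, Measurable (V n) :=
    fun n => measurable_pi_lambda _ fun k => (Bpt _).sub (Bpt t)
  set X : Ω → ℝ := fun ω => B ω t with hXdef
  have hXmeas : Measurable X := Bpt t
  -- per-level independence
  have hXV : ∀ n, IndepFun X (V n) ℙ := by
    intro n
    set N' := 2 ^ n with hN'
    set u : ℕ → ℝ := fun j => if j = 0 then 0 else x n (min (j-1) N') with hudef
    have hu_mem : ∀ j, u j ∈ Set.Icc 0 T := by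
      intro j
      by_cases hj : j = 0
      · simp [hudef, hj, hT0]
      · simp only [hudef, if_neg hj]
        exact hsub0T (hx_mem n _ (min_le_right _ _))
    have hu_mono : Monotone u := by
      intro a b hab
      by_cases ha : a = 0
      · subst ha
        simp only [hudef, if_pos rfl]
        by_cases hb : b = 0
        · simp [hb]
        · simp only [if_neg hb]
          exact le_trans ht0.le (hx_mem n _ (min_le_right _ _)).1
      · have hb : b ≠ 0 := by omega
        simp only [hudef, if_neg ha, if_neg hb]
        exact hx_mono n (by omega)
    have hii := hB.indep (N' + 1) u hu_mem hu_mono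
    have hWmeas : ∀ i : Fin (N' + 1),
        Measurable fun ω => B ω (u ((i : ℕ) + 1)) - B ω (u (i : ℕ)) :=
      fun i => (Bpt _).sub (Bpt _)
    have hfin := hii.indepFun_finset {(0 : Fin (N' + 1))} (Finset.univ \ {0})
      (Finset.sdiff_disjoint.symm) hWmeas
    set φL : (({(0 : Fin (N' + 1))} : Finset (Fin (N' + 1))) → ℝ) → ℝ :=
      fun v => v ⟨0, Finset.mem_singleton_self 0⟩ with hφL
    set φR : ((Finset.univ \ {(0 : Fin (N' + 1))} : Finset (Fin (N' + 1))) → ℝ) → ℕ → ℝ :=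
      fun v k => ∑ i : (Finset.univ \ {(0 : Fin (N' + 1))} : Finset (Fin (N' + 1))),
        if ((i : Fin (N' + 1)) : ℕ) ≤ min k N' then v i else 0 with hφR
    have hφLmeas : Measurable φL := measurable_pi_apply _
    have hφRmeas : Measurable φR := by
      apply measurable_pi_lambda
      intro k
      apply Finset.measurable_sum
      intro i _
      by_cases h : ((i : Fin (N' + 1)) : ℕ) ≤ min k N'
      · simpa [h] using measurable_pi_apply i
      · simpa [h] using (measurable_const : Measurable fun _ => (0:ℝ))
    have hc := hfin.comp hφLmeas hφRmeas
    have hu1 : u 1 = t := by simp [hudef, hx0 n]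
    have hu0 : u 0 = 0 := by simp [hudef]
    have hL : (φL ∘ fun a (i : ({(0 : Fin (N' + 1))} : Finset (Fin (N' + 1)))) =>
        B a (u ((i : ℕ) + 1)) - B a (u (i : ℕ))) = X := by
      funext ω
      simp only [Function.comp, hφL, hXdef]
      norm_num [hu1, hu0, hB.init ω]
    have hR : (φR ∘ fun a (i : (Finset.univ \ {(0 : Fin (N' + 1))} : Finset (Fin (N' + 1)))) =>
        B a (u ((i : ℕ) + 1)) - B a (u (i : ℕ))) = V n := by
      funext ω k
      simp only [Function.comp, hφR, hVdef]
      set K := min k N' with hK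
      have hKN : K ≤ N' := min_le_right _ _
      have e1 : (∑ i : (Finset.univ \ {(0 : Fin (N' + 1))} : Finset (Fin (N' + 1))),
          if ((i : Fin (N' + 1)) : ℕ) ≤ K then B ω (u (((i : Fin (N' + 1)) : ℕ) + 1))
            - B ω (u ((i : Fin (N' + 1)) : ℕ)) else 0)
          = ∑ i ∈ (Finset.univ \ {(0 : Fin (N' + 1))}),
            (if ((i : Fin (N' + 1)) : ℕ) ≤ K then B ω (u ((i : ℕ) + 1)) - B ω (u (i : ℕ)) else 0) :=
        Finset.sum_coe_sort (Finset.univ \ {(0 : Fin (N' + 1))})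
          (fun j : Fin (N' + 1) => if (j : ℕ) ≤ K then B ω (u ((j : ℕ) + 1)) - B ω (u (j : ℕ)) else 0)
      rw [e1]
      have e2 : (Finset.univ \ {(0 : Fin (N' + 1))}) = Finset.univ.erase 0 := by
        ext i; simp [Finset.mem_erase, eq_comm]
      rw [e2, Finset.sum_erase_eq_sub (Finset.mem_univ _)]
      have e3 : (∑ i : Fin (N' + 1),
          (if (i : ℕ) ≤ K then B ω (u ((i : ℕ) + 1)) - B ω (u (i : ℕ)) else 0))
          = ∑ j ∈ Finset.range (N' + 1), (if j ≤ K then B ω (u (j + 1)) - B ω (u j) else 0) :=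
        Fin.sum_univ_eq_sum_range (fun j => if j ≤ K then B ω (u (j + 1)) - B ω (u j) else 0) _
      rw [e3]
      have e4 : (∑ j ∈ Finset.range (N' + 1), (if j ≤ K then B ω (u (j + 1)) - B ω (u j) else 0))
          = ∑ j ∈ Finset.range (K + 1), (B ω (u (j + 1)) - B ω (u j)) := by
        rw [← Finset.sum_filter]
        apply Finset.sum_congr _ (fun _ _ => rfl)
        ext j
        simp only [Finset.mem_filter, Finset.mem_range]
        omega
      rw [e4, Finset.sum_range_sub (fun j => B ω (u j))]
      have huK : u (K + 1) = x n K := by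
        simp only [hudef, if_neg (Nat.succ_ne_zero K)]
        rw [Nat.succ_sub_one, min_eq_left hKN]
      have h0K : ((0 : Fin (N' + 1)) : ℕ) ≤ K := Nat.zero_le K
      rw [if_pos h0K]
      have hv0 : ((0 : Fin (N' + 1)) : ℕ) = 0 := rfl
      rw [hv0]
      norm_num [hu0, hu1, huK, hB.init ω]
    rw [hL, hR] at hc
    exact hc
  -- sigma algebras
  set G : ℕ → MeasurableSpace Ω := fun n => MeasurableSpace.comap (V n) inferInstance with hGdef
  have hGle : ∀ n, G n ≤ (inferInstance : MeasurableSpace Ω) := fun n => (hVmeas n).comap_le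
  have hGmono : Monotone G := by
    apply monotone_nat_of_le_succ
    intro n
    have hcomp : V n = (fun (v : ℕ → ℝ) (k : ℕ) => v (min (2*k) (2 ^ (n+1)))) ∘ V (n+1) := by
      funext ω k
      simp only [Function.comp, hVdef]
      have h1 : min (min (2*k) (2 ^ (n+1))) (2 ^ (n+1)) = min (2*k) (2 ^ (n+1)) := by omega
      rw [h1]
      have h2 : 2 * min k (2 ^ n) = min (2*k) (2 ^ (n+1)) := by
        have : 2 ^ (n+1) = 2 * 2 ^ n := by ring
        omega
      rw [← h2, ← hx_succ n (min k (2 ^ n))]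
    have hprojmeas : Measurable (fun (v : ℕ → ℝ) (k : ℕ) => v (min (2*k) (2 ^ (n+1)))) :=
      measurable_pi_lambda _ fun k => measurable_pi_apply _
    have h1 : G n = MeasurableSpace.comap (V (n+1))
        (MeasurableSpace.comap (fun (v : ℕ → ℝ) (k : ℕ) => v (min (2*k) (2 ^ (n+1))))
          (inferInstance : MeasurableSpace (ℕ → ℝ))) := by
      rw [hGdef]
      simp only
      rw [hcomp, ← MeasurableSpace.comap_comp]
    rw [h1, hGdef]
    exact MeasurableSpace.comap_mono hprojmeas.comap_le
  have hIndepSup : Indep (⨆ n, G n) (MeasurableSpace.comap X inferInstance) ℙ := by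
    apply indep_iSup_of_monotone (fun n => ?_) hGle hXmeas.comap_le hGmono
    exact (IndepFun_iff_Indep (V n) X ℙ).mp (hXV n).symm
  -- Y
  set Y : Ω → ℝ := fun ω => M ω - X ω with hYdef
  have hYmeas : Measurable Y := hMmeas.sub hXmeas
  have hSψ : ∀ n ω, S n ω - X ω = (Finset.range (2 ^ n)).sup' (hrne n)
      (fun k => F n k + V n ω k) := by
    intro n ω
    have h1 : (Finset.range (2 ^ n)).sup' (hrne n) (fun k => F n k + V n ω k) + X ω
        = (Finset.range (2 ^ n)).sup' (hrne n) (fun k => F n k + V n ω k + X ω) :=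
      (finset_sup'_add_const _ _ _ _).symm
    have h2 : ∀ k ∈ Finset.range (2 ^ n), F n k + V n ω k + X ω = F n k + B ω (x n k) := by
      intro k hk
      rw [Finset.mem_range] at hk
      simp only [hVdef, hXdef, min_eq_left hk.le]
      ring
    rw [sub_eq_iff_eq_add, h1]
    exact (Finset.sup'_congr (hrne n) rfl h2).symm
  have hY_measG : Measurable[⨆ n, G n] Y := by
    have hVG : ∀ n, Measurable[G n] (V n) := fun n s hs => ⟨s, hs, rfl⟩
    have hYn : ∀ n, Measurable[G n] fun ω => S n ω - X ω := by
      intro n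
      have hψ : Measurable fun v : ℕ → ℝ =>
          (Finset.range (2 ^ n)).sup' (hrne n) (fun k => F n k + v k) :=
        measurable_finset_sup' _ (fun k => measurable_const.add (measurable_pi_apply k)) (hrne n)
      have : (fun ω => S n ω - X ω) = (fun v : ℕ → ℝ =>
          (Finset.range (2 ^ n)).sup' (hrne n) (fun k => F n k + v k)) ∘ V n := by
        funext ω
        simp only [Function.comp]
        exact hSψ n ω
      rw [this]
      exact hψ.comp (hVG n)
    exact @measurable_of_tendsto_metrizable Ω ℝ (⨆ n, G n) _ _ _ _
      (fun n ω => S n ω - X ω) Y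
      (fun n => (hYn n).mono (le_iSup G n) le_rfl)
      (tendsto_pi_nhds.mpr fun ω => (hconv ω).sub_const (X ω))
  have hYX : IndepFun Y X ℙ := by
    rw [IndepFun_iff_Indep]
    exact indep_mono hIndepSup (measurable_iff_comap_le.mp hY_measG) le_rfl
  -- law of X
  have hlaw : (Measure.map X ℙ) = gaussianReal 0 (Real.toNNReal t) := by
    have hg := hB.gauss 0 t ⟨le_rfl, hT0⟩ ⟨ht0.le, htT⟩ ht0.le
    have he : (fun ω => B ω t - B ω 0) = X := by
      funext ω; rw [hB.init ω, sub_zero]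
    rw [he] at hg
    simpa using hg
  have hXac : (Measure.map X ℙ) ≪ (volume : Measure ℝ) := by
    rw [hlaw]
    exact gaussianReal_absolutelyContinuous 0 (by
      simp only [ne_eq, Real.toNNReal_eq_zero, not_le]
      exact ht0)
  refine ⟨hMmeas, fun N hN hN0 => ?_⟩
  haveI : IsProbabilityMeasure ((Measure.map X ℙ)) := Measure.isProbabilityMeasure_map hXmeas.aemeasurable
  haveI : IsProbabilityMeasure ((Measure.map Y ℙ)) := Measure.isProbabilityMeasure_map hYmeas.aemeasurable
  have hMYX : M = fun ω => Y ω + X ω := funext fun ω => (sub_add_cancel (M ω) (X ω)).symm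
  have hsetmeas : MeasurableSet {p : ℝ × ℝ | p.1 + p.2 ∈ N} :=
    (measurable_fst.add measurable_snd) hN
  have step1 : ℙ (M ⁻¹' N) = (Measure.map (fun ω => (Y ω, X ω)) ℙ) {p : ℝ × ℝ | p.1 + p.2 ∈ N} := by
    rw [Measure.map_apply (hYmeas.prodMk hXmeas) hsetmeas]
    congr 1
    rw [hMYX]
    rfl
  have step2 : (Measure.map (fun ω => (Y ω, X ω)) ℙ) = ((Measure.map Y ℙ)).prod ((Measure.map X ℙ)) :=
    (indepFun_iff_map_prod_eq_prod_map_map hYmeas.aemeasurable hXmeas.aemeasurable).mp hYX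
  rw [step1, step2, Measure.prod_apply hsetmeas]
  have hnull : ∀ y : ℝ, Measure.map X ℙ {a : ℝ | y + a ∈ N} = 0 := by
    intro y
    have h : {a : ℝ | y + a ∈ N} = (fun z => y + z) ⁻¹' N := rfl
    rw [h]
    exact hXac (by rw [measure_preimage_add]; exact hN0)
  simp only [Set.preimage_setOf_eq]
  have hz : ∫⁻ (y : ℝ), Measure.map X ℙ {a : ℝ | y + a ∈ N} ∂(Measure.map Y ℙ)
      = ∫⁻ (_ : ℝ), 0 ∂(Measure.map Y ℙ) := lintegral_congr fun y => hnull y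
  rw [hz, lintegral_zero]

theorem stmt7 {Ω : Type*} [MeasureSpace Ω] [IsProbabilityMeasure (ℙ : Measure Ω)]
    (T : ℝ) (hT : 0 < T)
    (B : Ω → ℝ → ℝ) (hB : IsBrownianMotionOn B 0 1 (Set.Icc 0 T))
    (hBmeas : Measurable fun ω => (B ω : ℝ → ℝ))
    (f : ℝ → ℝ) (hfmeas : Measurable f) (hfbdd : ∃ C : ℝ, ∀ s ∈ Set.Icc 0 T, |f s| ≤ C)
    (hattain : ∀ᵐ ω ∂ℙ, ∃ s ∈ Set.Ioc 0 T, ∀ u ∈ Set.Ioc 0 T,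
        f u + B ω u ≤ f s + B ω s) :
    Measure.map (fun ω => sSup ((fun s => f s + B ω s) '' Set.Ioc 0 T)) ℙ
      ≪ (volume : Measure ℝ) := by
  classical
  by_cases hAE : AEMeasurable (fun ω => sSup ((fun s => f s + B ω s) '' Set.Ioc 0 T)) ℙ
  · obtain ⟨C, hC⟩ := hfbdd
    refine Measure.AbsolutelyContinuous.mk fun N hN hN0 => ?_
    rw [Measure.map_apply_of_aemeasurable hAE hN]
    set tt : ℕ → ℝ := fun n => T / (n+1) with httdef
    have htt0 : ∀ n, 0 < tt n := fun n => div_pos hT (by positivity)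
    have httT : ∀ n, tt n ≤ T := by
      intro n
      apply div_le_self hT.le
      have : (0:ℝ) ≤ (n:ℝ) := Nat.cast_nonneg n
      linarith
    have hkey := fun n => key_ac T B hB hBmeas f C hC (tt n) (htt0 n) (httT n)
    set Mt : ℕ → Ω → ℝ := fun n ω => sSup ((fun s => f s + B ω s) '' Set.Icc (tt n) T)
      with hMtdef
    have hincl : (fun ω => sSup ((fun s => f s + B ω s) '' Set.Ioc 0 T)) ⁻¹' N ⊆
        (⋃ n, Mt n ⁻¹' N) ∪
          {ω | ¬ ∃ s ∈ Set.Ioc 0 T, ∀ u ∈ Set.Ioc 0 T, f u + B ω u ≤ f s + B ω s} := by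
      intro ω hω
      by_cases hat : ∃ s ∈ Set.Ioc 0 T, ∀ u ∈ Set.Ioc 0 T, f u + B ω u ≤ f s + B ω s
      · left
        obtain ⟨sx, hsx, hmax⟩ := hat
        obtain ⟨n, hn⟩ : ∃ n : ℕ, tt n ≤ sx := by
          obtain ⟨m, hm⟩ := exists_nat_gt (T / sx)
          refine ⟨m, ?_⟩
          rw [httdef]
          rw [div_le_iff₀ (by positivity : (0:ℝ) < (m:ℝ)+1)]
          rw [div_lt_iff₀ hsx.1] at hm
          nlinarith [hsx.1.le]
        refine Set.mem_iUnion.mpr ⟨n, ?_⟩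
        obtain ⟨Cb, hCb⟩ := isCompact_Icc.exists_bound_of_continuousOn (hB.cont ω)
        have hIocsub : Set.Ioc 0 T ⊆ Set.Icc 0 T := Set.Ioc_subset_Icc_self
        have hbdd1 : BddAbove ((fun s => f s + B ω s) '' Set.Ioc 0 T) := by
          refine ⟨C + Cb, ?_⟩
          rintro y ⟨v, hv, rfl⟩
          exact add_le_add (le_trans (le_abs_self _) (hC v (hIocsub hv)))
            (le_trans (le_abs_self _) (hCb v (hIocsub hv)))
        have hsubIcc : Set.Icc (tt n) T ⊆ Set.Ioc 0 T :=
          fun r hr => ⟨lt_of_lt_of_le (htt0 n) hr.1, hr.2⟩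
        have hbdd2 : BddAbove ((fun s => f s + B ω s) '' Set.Icc (tt n) T) := by
          refine ⟨C + Cb, ?_⟩
          rintro y ⟨v, hv, rfl⟩
          exact add_le_add (le_trans (le_abs_self _) (hC v (hIocsub (hsubIcc hv))))
            (le_trans (le_abs_self _) (hCb v (hIocsub (hsubIcc hv))))
        have heq : Mt n ω = sSup ((fun s => f s + B ω s) '' Set.Ioc 0 T) := by
          apply le_antisymm
          · apply csSup_le ⟨_, Set.mem_image_of_mem _ (Set.right_mem_Icc.mpr (httT n))⟩
            rintro y ⟨v, hv, rfl⟩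
            exact le_csSup hbdd1 (Set.mem_image_of_mem _ (hsubIcc hv))
          · apply csSup_le ⟨_, Set.mem_image_of_mem _ (Set.right_mem_Ioc.mpr hT)⟩
            rintro y ⟨v, hv, rfl⟩
            calc f v + B ω v ≤ f sx + B ω sx := hmax v hv
            _ ≤ Mt n ω := le_csSup hbdd2 (Set.mem_image_of_mem _ ⟨hn, hsx.2⟩)
        rw [Set.mem_preimage, heq]
        exact hω
      · right
        exact hat
    have h1 : ℙ (⋃ n, Mt n ⁻¹' N) = 0 :=
      measure_iUnion_null fun n => (hkey n).2 N hN hN0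
    have h2 : ℙ {ω | ¬ ∃ s ∈ Set.Ioc 0 T, ∀ u ∈ Set.Ioc 0 T,
        f u + B ω u ≤ f s + B ω s} = 0 := hattain
    exact le_antisymm (le_trans (measure_mono hincl)
      (le_of_eq (measure_union_null h1 h2))) zero_le
  · rw [Measure.map_of_not_aemeasurable hAE]
    exact Measure.AbsolutelyContinuous.mk fun s hs h => by simp
end

section
/- Let h₀ : ℝ → ℝ ∪ {−∞} with h₀ ≢ −∞ be such that h₀ is bounded above on compacts but not t₀-finitary, i.e., (h₀(x) − x²/t₀)/|x| does not tend to −∞ as |x| → ∞. Then there exist a > −∞ and a sequence x_n with |x_n| → ∞ such that h₀(x_n) − x_n²/t₀ > a|x_n| for all n; and for any continuous function L : ℝ → ℝ satisfying |L(x) + (x−y)²/t₀| ≤ C(1+|x|^{1/5}) for fixed y with ∓2y/t₀ < a (sign matching the sign of ±x_n → ±∞) and some C, one has sup_x ( h₀(x) + L(x) ) = +∞. -/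
open Set Filter

private lemma tendsto_aux15 {ε C : ℝ} (hε : 0 < ε) :
    Tendsto (fun r : ℝ => ε * r - C * r ^ ((1:ℝ)/5)) atTop atTop := by
  have h1 : Tendsto (fun r : ℝ => r ^ ((1:ℝ)/5) * (ε * r ^ ((4:ℝ)/5) - C)) atTop atTop := by
    apply Tendsto.atTop_mul_atTop₀ (tendsto_rpow_atTop (by norm_num))
    have h2 := (tendsto_rpow_atTop (show (0:ℝ) < 4/5 by norm_num)).const_mul_atTop hε
    simpa [sub_eq_add_neg] using tendsto_atTop_add_const_right atTop (-C) h2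
  refine h1.congr' ?_
  filter_upwards [eventually_gt_atTop (0:ℝ)] with r hr
  rw [mul_sub, ← mul_assoc, mul_comm (r ^ ((1:ℝ)/5)) ε, mul_assoc, ← Real.rpow_add hr]
  norm_num [mul_comm]

theorem stmt15 (t₀ : ℝ) (ht₀ : 0 < t₀) (h₀ : ℝ → EReal)
    (hne : ∃ x, h₀ x ≠ ⊥)
    (hbdd : ∀ K : Set ℝ, IsCompact K → ∃ M : ℝ, ∀ x ∈ K, h₀ x ≤ (M : EReal))
    -- `h₀` is not `t₀`-finitary: `(h₀(x) − x²/t₀)/|x|` does not tend to `−∞`.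
    (hnotfin : ¬ ∀ M : ℝ, ∃ N : ℝ, ∀ x : ℝ, N ≤ |x| →
        h₀ x ≤ ((x ^ 2 / t₀ + M * |x| : ℝ) : EReal)) :
    ∃ (a : ℝ) (σ : ℝ) (x : ℕ → ℝ), (σ = 1 ∨ σ = -1) ∧
      Tendsto (fun n => σ * x n) atTop atTop ∧
      (∀ n, ((a * |x n| + (x n) ^ 2 / t₀ : ℝ) : EReal) < h₀ (x n)) ∧
      ∀ (y C : ℝ) (L : ℝ → ℝ), Continuous L →
        (∀ z : ℝ, |L z + (z - y) ^ 2 / t₀| ≤ C * (1 + |z| ^ ((1 : ℝ) / 5))) →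
        -σ * (2 * y) / t₀ < a →
        ∀ M : ℝ, ∃ z : ℝ, (M : EReal) < h₀ z + ((L z : ℝ) : EReal) := by
  push_neg at hnotfin
  obtain ⟨a, ha⟩ := hnotfin
  choose f hf1 hf2 using fun n : ℕ => ha (n : ℝ)
  -- pick a sign σ and an extraction φ with σ * f (φ n) = |f (φ n)|
  obtain ⟨σ, hσ, φ, hφ, hsign⟩ :
      ∃ σ : ℝ, (σ = 1 ∨ σ = -1) ∧ ∃ φ : ℕ → ℕ, StrictMono φ ∧
        ∀ n, σ * f (φ n) = |f (φ n)| := by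
    by_cases hfreq : ∃ᶠ n in atTop, 0 ≤ f n
    · obtain ⟨φ, hφ, hp⟩ := extraction_of_frequently_atTop hfreq
      exact ⟨1, Or.inl rfl, φ, hφ, fun n => by rw [one_mul, abs_of_nonneg (hp n)]⟩
    · have hev : ∀ᶠ n in atTop, f n < 0 := by
        filter_upwards [not_frequently.mp hfreq] with n hn
        exact lt_of_not_ge hn
      obtain ⟨φ, hφ, hp⟩ := extraction_of_frequently_atTop hev.frequently
      exact ⟨-1, Or.inr rfl, φ, hφ, fun n => by
        rw [abs_of_neg (hp n)]; ring⟩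
  have habsσ : |σ| = 1 := by rcases hσ with h | h <;> simp [h]
  have htend : Tendsto (fun n => σ * f (φ n)) atTop atTop := by
    apply tendsto_atTop_mono (fun n => ?_) tendsto_natCast_atTop_atTop
    calc (n : ℝ) ≤ (φ n : ℝ) := by exact_mod_cast hφ.le_apply
    _ ≤ |f (φ n)| := hf1 (φ n)
    _ = σ * f (φ n) := (hsign n).symm
  refine ⟨a, σ, fun n => f (φ n), hσ, htend, fun n => ?_, ?_⟩
  · have h := hf2 (φ n)
    rwa [show ((f (φ n))^2/t₀ + a * |f (φ n)| : ℝ)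
        = (a * |f (φ n)| + (f (φ n))^2/t₀ : ℝ) from by ring] at h
  · intro y C L hL hbound hya M
    have hε : 0 < a + σ * (2 * y) / t₀ := by
      have h1 : -σ * (2 * y) / t₀ = -(σ * (2 * y) / t₀) := by ring
      rw [h1] at hya; linarith
    have hT := (tendsto_aux15 (C := C) hε).comp htend
    have hev := (hT.eventually_gt_atTop (M + y^2/t₀ + C)).and
      (htend.eventually_ge_atTop 1)
    obtain ⟨n, key, hr1⟩ := hev.exists
    set u := f (φ n) with hu_def
    set r := σ * u with hr_def
    have hu : u = σ * r := by
      rcases hσ with h | h <;> simp [hr_def, h] <;> ring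
    have hrpos : (0:ℝ) < r := lt_of_lt_of_le one_pos hr1
    have habs : |u| = r := by
      rw [hu, abs_mul, habsσ, one_mul, abs_of_pos hrpos]
    refine ⟨u, ?_⟩
    -- EReal chain
    have h2 : ((u^2/t₀ + a * |u| : ℝ) : EReal) < h₀ u := hf2 (φ n)
    have hchain : ((u^2/t₀ + a * |u| + L u : ℝ) : EReal) ≤ h₀ u + ((L u : ℝ) : EReal) := by
      rw [show ((u^2/t₀ + a * |u| + L u : ℝ) : EReal)
          = ((u^2/t₀ + a * |u| : ℝ) : EReal) + ((L u : ℝ) : EReal) from by push_cast; rfl]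
      exact add_le_add_left h2.le _
    refine lt_of_lt_of_le ?_ hchain
    rw [EReal.coe_lt_coe_iff]
    -- real estimate
    have hLb := (abs_le.mp (hbound u)).1
    rw [habs] at hLb
    have e1 : u^2/t₀ - (u - y)^2/t₀ = σ * (2 * y) / t₀ * r - y^2/t₀ := by
      rw [hu]
      have hσ2 : σ * σ = 1 := by rcases hσ with h | h <;> simp [h]
      field_simp
      nlinarith [hσ2]
    have e2 : C * (1 + r ^ ((1:ℝ)/5)) = C + C * r ^ ((1:ℝ)/5) := by ring
    have e3 : (a + σ * (2 * y) / t₀) * r = a * r + σ * (2 * y) / t₀ * r := by ring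
    have key' : M + y^2/t₀ + C < (a + σ * (2 * y) / t₀) * r - C * r ^ ((1:ℝ)/5) := key
    rw [habs]
    linarith
end

section
/- Let f = (f₁, …, f_n) be continuous functions ℝ → ℝ, x ≤ y ∈ ℝ, 1 ≤ m < ℓ ≤ n. Then for any fixed z ∈ [x,y], f[(x,ℓ)→(y,m)] = sup_{k∈{m,…,ℓ}} ( f[(x,ℓ)→(z,k)] + f[(z,k)→(y,m)] ). -/
open Set

lemma isJumpSeq_const {a b : ℝ} (hab : a ≤ b) {m l : ℕ} (hm : 1 ≤ m) (hml : m ≤ l) :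
    IsJumpSeq a b m l (fun i => if m ≤ i then a else b) := by
  refine ⟨by simp [hml], ?_, ?_⟩
  · have : ¬ (m ≤ m - 1) := by omega
    simp [this]
  · intro i j _ hij _
    by_cases hj : m ≤ j
    · simp only [hj, if_true]
      by_cases hi : m ≤ i <;> simp [hi, hab]
    · have hi : ¬ m ≤ i := by omega
      simp [hi, hj]

lemma jumpSeq_mem {a b : ℝ} {m l : ℕ} {t : ℕ → ℝ} (h : IsJumpSeq a b m l t)
    {i : ℕ} (h1 : m - 1 ≤ i) (h2 : i ≤ l) : a ≤ t i ∧ t i ≤ b := by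
  constructor
  · rw [← h.1]; exact h.2.2 i l h1 h2 le_rfl
  · rw [← h.2.1]; exact h.2.2 (m - 1) i le_rfl h1 h2

lemma lpp_nonempty (f : ℕ → ℝ → ℝ) {a b : ℝ} (hab : a ≤ b) {m l : ℕ} (hm : 1 ≤ m)
    (hml : m ≤ l) : (pathLen f m l '' {t | IsJumpSeq a b m l t}).Nonempty := by
  refine ⟨pathLen f m l (fun i => if m ≤ i then a else b),
    Set.mem_image_of_mem _ ?_⟩
  simp only [Set.mem_setOf_eq]
  exact isJumpSeq_const hab hm hml

lemma pathLen_bdd (f : ℕ → ℝ → ℝ) (hf : ∀ i, Continuous (f i)) {a b : ℝ}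
    (m l : ℕ) : BddAbove (pathLen f m l '' {t | IsJumpSeq a b m l t}) := by
  have hC : ∀ i : ℕ, ∃ C : ℝ, ∀ s ∈ Set.Icc a b, |f i s| ≤ C := by
    intro i
    obtain ⟨C, hC⟩ := (isCompact_Icc (a := a) (b := b)).exists_bound_of_continuousOn
      ((hf i).continuousOn)
    exact ⟨C, fun s hs => by simpa [Real.norm_eq_abs] using hC s hs⟩
  choose C hC using hC
  refine ⟨∑ i ∈ Finset.Icc m l, 2 * C i, ?_⟩
  rintro v ⟨t, ht, rfl⟩
  refine Finset.sum_le_sum ?_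
  intro i hi
  simp only [Finset.mem_Icc] at hi
  have h1 := jumpSeq_mem ht (i := i - 1) (by omega) (by omega)
  have h2 := jumpSeq_mem ht (i := i) (by omega) (by omega)
  have hb1 := hC i _ (Set.mem_Icc.mpr h1)
  have hb2 := hC i _ (Set.mem_Icc.mpr h2)
  have := abs_le.mp hb1
  have := abs_le.mp hb2
  linarith [this.1, this.2]

lemma pathLen_split (f : ℕ → ℝ → ℝ) {m k l : ℕ} (hm : 1 ≤ m) (hmk : m ≤ k) (hkl : k ≤ l)
    {t t1 t2 : ℕ → ℝ}
    (h2 : ∀ i, m - 1 ≤ i → i ≤ k - 1 → t i = t2 i)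
    (h1 : ∀ i, k ≤ i → i ≤ l → t i = t1 i)
    (hz : t1 (k - 1) = t2 k) :
    pathLen f m l t = pathLen f m k t2 + pathLen f k l t1 := by
  have hk1 : 1 ≤ k := le_trans hm hmk
  unfold pathLen
  have em : m = (m - 1) + 1 := by omega
  have ek : k = (k - 1) + 1 := by omega
  have eIl : Finset.Icc m l = Finset.Ioc (m - 1) l := by
    ext i; simp only [Finset.mem_Icc, Finset.mem_Ioc]; omega
  have eIk : Finset.Icc m k = Finset.Ioc (m - 1) k := by
    ext i; simp only [Finset.mem_Icc, Finset.mem_Ioc]; omega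
  have eIkl : Finset.Icc k l = Finset.Ioc (k - 1) l := by
    ext i; simp only [Finset.mem_Icc, Finset.mem_Ioc]; omega
  rw [eIl, eIk, eIkl]
  rw [← Finset.sum_Ioc_consecutive (fun i => f i (t (i - 1)) - f i (t i))
      (show m - 1 ≤ k by omega) hkl]
  rw [← Finset.sum_Ioc_consecutive (fun i => f i (t1 (i - 1)) - f i (t1 i))
      (show k - 1 ≤ k by omega) hkl]
  have splitk : ∀ u : ℕ → ℝ, ∑ i ∈ Finset.Ioc (m - 1) k, (f i (u (i - 1)) - f i (u i))
      = ∑ i ∈ Finset.Ioc (m - 1) (k - 1), (f i (u (i - 1)) - f i (u i))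
        + (f k (u (k - 1)) - f k (u k)) := by
    intro u
    have : Finset.Ioc (m - 1) k = Finset.Ioc (m - 1) ((k - 1) + 1) := by rw [← ek]
    rw [this, Finset.sum_Ioc_succ_top (by omega), ← ek]
  have splitk1 : ∑ i ∈ Finset.Ioc (k - 1) k, (f i (t1 (i - 1)) - f i (t1 i))
      = f k (t1 (k - 1)) - f k (t1 k) := by
    have : Finset.Ioc (k - 1) k = {k} := by
      ext i; simp only [Finset.mem_Ioc, Finset.mem_singleton]; omega
    rw [this, Finset.sum_singleton]
  rw [splitk t, splitk t2, splitk1]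
  have e1 : ∑ i ∈ Finset.Ioc (m - 1) (k - 1), (f i (t (i - 1)) - f i (t i))
      = ∑ i ∈ Finset.Ioc (m - 1) (k - 1), (f i (t2 (i - 1)) - f i (t2 i)) := by
    refine Finset.sum_congr rfl ?_
    intro i hi
    simp only [Finset.mem_Ioc] at hi
    rw [h2 i (by omega) (by omega), h2 (i - 1) (by omega) (by omega)]
  have e2 : ∑ i ∈ Finset.Ioc k l, (f i (t (i - 1)) - f i (t i))
      = ∑ i ∈ Finset.Ioc k l, (f i (t1 (i - 1)) - f i (t1 i)) := by
    refine Finset.sum_congr rfl ?_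
    intro i hi
    simp only [Finset.mem_Ioc] at hi
    rw [h1 i (by omega) (by omega), h1 (i - 1) (by omega) (by omega)]
  have e3 : t (k - 1) = t2 (k - 1) := h2 (k - 1) (by omega) le_rfl
  have e4 : t k = t1 k := h1 k le_rfl hkl
  rw [e1, e2, e3, e4, hz]
  ring

theorem stmt18 (n : ℕ) (f : ℕ → ℝ → ℝ) (hf : ∀ i, Continuous (f i))
    (x y z : ℝ) (hxy : x ≤ y) (hz : z ∈ Set.Icc x y)
    (m l : ℕ) (hm : 1 ≤ m) (hml : m < l) (hln : l ≤ n) :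
    lppValue f x l y m
      = sSup ((fun k => lppValue f x l z k + lppValue f z k y m) '' Set.Icc m l) := by
  obtain ⟨hxz, hzy⟩ := hz
  set S : Set ℝ := pathLen f m l '' {t | IsJumpSeq x y m l t} with hS
  set T : Set ℝ := (fun k => lppValue f x l z k + lppValue f z k y m) '' Set.Icc m l with hT
  have Sne : S.Nonempty := lpp_nonempty f hxy hm (le_of_lt hml)
  have SBdd : BddAbove S := pathLen_bdd f hf m l
  have TBdd : BddAbove T := ((Set.finite_Icc m l).image _).bddAbove
  have Tne : T.Nonempty := ⟨_, ⟨m, Set.mem_Icc.mpr ⟨le_rfl, le_of_lt hml⟩, rfl⟩⟩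
  -- sets for intermediate values
  have Ane : ∀ k, 1 ≤ k → k ≤ l →
      (pathLen f k l '' {t | IsJumpSeq x z k l t}).Nonempty :=
    fun k hk hkl => lpp_nonempty f hxz hk hkl
  have ABdd : ∀ k, BddAbove (pathLen f k l '' {t | IsJumpSeq x z k l t}) :=
    fun k => pathLen_bdd f hf k l
  have Bne : ∀ k, m ≤ k →
      (pathLen f m k '' {t | IsJumpSeq z y m k t}).Nonempty :=
    fun k hk => lpp_nonempty f hzy hm hk
  have BBdd : ∀ k, BddAbove (pathLen f m k '' {t | IsJumpSeq z y m k t}) :=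
    fun k => pathLen_bdd f hf m k
  show sSup S = sSup T
  apply le_antisymm
  · -- ≤ : split each path at z
    refine csSup_le Sne ?_
    rintro v ⟨t, ht, rfl⟩
    simp only [Set.mem_setOf_eq] at ht
    -- choose the crossing line k
    set F : Finset ℕ := (Finset.Icc m l).filter (fun k => z ≤ t (k - 1)) with hF
    have hmF : m ∈ F := by
      rw [hF, Finset.mem_filter, Finset.mem_Icc]
      exact ⟨⟨le_rfl, le_of_lt hml⟩, by rw [ht.2.1]; exact hzy⟩
    set k : ℕ := F.max' ⟨m, hmF⟩ with hk
    have hkF : k ∈ F := Finset.max'_mem _ _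
    have hkIcc : k ∈ Finset.Icc m l := (Finset.mem_filter.mp hkF).1
    have hmk : m ≤ k := (Finset.mem_Icc.mp hkIcc).1
    have hkl : k ≤ l := (Finset.mem_Icc.mp hkIcc).2
    have hk1 : 1 ≤ k := le_trans hm hmk
    have hzk1 : z ≤ t (k - 1) := (Finset.mem_filter.mp hkF).2
    have hzk2 : t k ≤ z := by
      by_cases hkeq : k = l
      · rw [hkeq, ht.1]; exact hxz
      · have hkl' : k + 1 ≤ l := by omega
        have : k + 1 ∉ F := by
          intro hmem
          have := Finset.le_max' F (k + 1) hmem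
          omega
        rw [hF, Finset.mem_filter, Finset.mem_Icc] at this
        push_neg at this
        have h := this ⟨by omega, hkl'⟩
        simp only [Nat.add_sub_cancel] at h
        exact le_of_lt h
    -- split the path
    set t1 : ℕ → ℝ := Function.update t (k - 1) z with ht1def
    set t2 : ℕ → ℝ := Function.update t k z with ht2def
    have hu1 : ∀ i, i ≠ k - 1 → t1 i = t i := fun i hi => Function.update_of_ne hi _ _
    have hu2 : ∀ i, i ≠ k → t2 i = t i := fun i hi => Function.update_of_ne hi _ _
    have hupd1 : t1 (k - 1) = z := by rw [ht1def]; exact Function.update_self _ _ _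
    have hupd2 : t2 k = z := by rw [ht2def]; exact Function.update_self _ _ _
    have ht1 : IsJumpSeq x z k l t1 := by
      refine ⟨?_, ?_, ?_⟩
      · rw [hu1 l (by omega), ht.1]
      · exact hupd1
      · intro i j hi hij hjl
        by_cases hjk : j = k - 1
        · have : i = k - 1 := by omega
          rw [hjk, this]
        · rw [hu1 j hjk]
          by_cases hik : i = k - 1
          · rw [hik, hupd1]
            calc t j ≤ t k := ht.2.2 k j (by omega) (by omega) hjl
            _ ≤ z := hzk2
          · rw [hu1 i hik]
            exact ht.2.2 i j (by omega) hij hjl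
    have ht2 : IsJumpSeq z y m k t2 := by
      refine ⟨?_, ?_, ?_⟩
      · exact hupd2
      · rw [hu2 (m - 1) (by omega), ht.2.1]
      · intro i j hi hij hjk
        by_cases hjeq : j = k
        · rw [hjeq, hupd2]
          by_cases hieq : i = k
          · rw [hieq, hupd2]
          · rw [hu2 i hieq]
            calc z ≤ t (k - 1) := hzk1
            _ ≤ t i := ht.2.2 i (k - 1) hi (by omega) (by omega)
        · rw [hu2 j hjeq, hu2 i (by omega)]
          exact ht.2.2 i j hi hij (by omega)
    have hsplit : pathLen f m l t = pathLen f m k t2 + pathLen f k l t1 := by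
      refine pathLen_split f hm hmk hkl ?_ ?_ ?_
      · intro i hi1 hi2; rw [hu2 i (by omega)]
      · intro i hi1 hi2; rw [hu1 i (by omega)]
      · rw [hupd1, hupd2]
    have hA : pathLen f k l t1 ≤ lppValue f x l z k :=
      le_csSup (ABdd k) ⟨t1, ht1, rfl⟩
    have hB : pathLen f m k t2 ≤ lppValue f z k y m :=
      le_csSup (BBdd k) ⟨t2, ht2, rfl⟩
    have hmemT : lppValue f x l z k + lppValue f z k y m ∈ T :=
      ⟨k, Set.mem_Icc.mpr ⟨hmk, hkl⟩, rfl⟩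
    have := le_csSup TBdd hmemT
    linarith
  · -- ≥ : glue paths
    refine csSup_le Tne ?_
    rintro v ⟨k, hk, rfl⟩
    show lppValue f x l z k + lppValue f z k y m ≤ sSup S
    rw [Set.mem_Icc] at hk
    obtain ⟨hmk, hkl⟩ := hk
    have hk1 : 1 ≤ k := le_trans hm hmk
    have key : ∀ a ∈ pathLen f k l '' {t | IsJumpSeq x z k l t},
        ∀ b ∈ pathLen f m k '' {t | IsJumpSeq z y m k t}, a + b ≤ sSup S := by
      rintro a ⟨t1, ht1, rfl⟩ b ⟨t2, ht2, rfl⟩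
      simp only [Set.mem_setOf_eq] at ht1 ht2
      set t : ℕ → ℝ := fun i => if k ≤ i then t1 i else t2 i with htdef
      have hv1 : ∀ i, k ≤ i → t i = t1 i := by intro i hi; simp [htdef, hi]
      have hv2 : ∀ i, i < k → t i = t2 i := by
        intro i hi; simp [htdef, Nat.not_le.mpr hi]
      have ht : IsJumpSeq x y m l t := by
        refine ⟨?_, ?_, ?_⟩
        · rw [hv1 l hkl, ht1.1]
        · rw [hv2 (m - 1) (by omega), ht2.2.1]
        · intro i j hi hij hjl
          by_cases hik : k ≤ i
          · rw [hv1 i hik, hv1 j (le_trans hik hij)]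
            exact ht1.2.2 i j (by omega) hij hjl
          · by_cases hjk : k ≤ j
            · rw [hv2 i (by omega), hv1 j hjk]
              calc t1 j ≤ t1 (k - 1) := ht1.2.2 (k - 1) j le_rfl (by omega) hjl
              _ = z := ht1.2.1
              _ = t2 k := ht2.1.symm
              _ ≤ t2 i := ht2.2.2 i k hi (by omega) le_rfl
            · rw [hv2 i (by omega), hv2 j (by omega)]
              exact ht2.2.2 i j hi hij (by omega)
      have hsplit : pathLen f m l t = pathLen f m k t2 + pathLen f k l t1 := by
        refine pathLen_split f hm hmk hkl ?_ ?_ ?_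
        · intro i hi1 hi2; exact hv2 i (by omega)
        · intro i hi1 hi2; exact hv1 i hi1
        · rw [ht1.2.1, ht2.1]
      have := le_csSup SBdd (show pathLen f m l t ∈ S from ⟨t, ht, rfl⟩)
      linarith
    have h1 : lppValue f x l z k ≤ sSup S - lppValue f z k y m := by
      refine csSup_le (Ane k hk1 hkl) ?_
      intro a ha
      have h2 : lppValue f z k y m ≤ sSup S - a := by
        refine csSup_le (Bne k hmk) ?_
        intro b hb
        linarith [key a ha b hb]
      linarith
    linarith
end
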